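/- arXiv:1611.03009 — 4 statements merged into one kernel-verified Lean document; each statement's English description precedes it below -/
import Mathlib

section
/- Let X be a random vector in ℝ^d with absolutely continuous distribution, let f, g : ℝ^d → ℝ be measurable, and suppose that for some α > 0 and constants C_f, C_g ≥ 0 one has ‖P_{f(X)} − P_{f(X)+u}‖_var ≤ C_f·|u|^α and ‖P_{g(X)} − P_{g(X)+u}‖_var ≤ C_g·|u|^α for all u ∈ ℝ. Then ‖P_{f(X)} − P_{g(X)}‖_var ≤ C·‖f − g‖_{L¹(dP_X)}^{α/(α+1)}, where C = (C_f + C_g)^{1/(α+1)}·(E|ν|^α + √(π/2)) and ν is a standard Gaussian random variable. -/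
open MeasureTheory ProbabilityTheory

/-- Total variation distance between two (finite) measures, via the Jordan-type
decomposition given by measure subtraction: `‖μ - ν‖_var = (μ - ν)(univ) + (ν - μ)(univ)`. -/
noncomputable def tvDist {α : Type*} [MeasurableSpace α] (μ ν : Measure α) : ℝ :=
  ((μ - ν) Set.univ + (ν - μ) Set.univ).toReal

open Set
open scoped ENNReal NNReal Real

namespace TVAux

variable {α : Type*} [MeasurableSpace α] {μ ν : Measure α} {s : Set α}

lemma tv_nonneg (μ ν : Measure α) : 0 ≤ tvDist μ ν := ENNReal.toReal_nonneg

/-- key structural lemma: μ - ν = μ.restrict s - ν.restrict s for a Hahn set s -/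
lemma sub_eq_restrict_sub (hs : MeasurableSet s)
    [IsFiniteMeasure μ] [IsFiniteMeasure ν]
    (h1 : ∀ t, MeasurableSet t → t ⊆ s → ν t ≤ μ t)
    (h2 : ∀ t, MeasurableSet t → t ⊆ sᶜ → μ t ≤ ν t) :
    μ - ν = μ.restrict s - ν.restrict s := by
  have hle : ν.restrict s ≤ μ.restrict s := by
    rw [Measure.le_iff]
    intro t ht
    rw [Measure.restrict_apply ht, Measure.restrict_apply ht]
    exact h1 _ (ht.inter hs) inter_subset_right
  have hd_apply : ∀ t, MeasurableSet t →
      (μ.restrict s - ν.restrict s) t = μ (t ∩ s) - ν (t ∩ s) := by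
    intro t ht
    rw [Measure.sub_apply ht hle, Measure.restrict_apply ht, Measure.restrict_apply ht]
  apply le_antisymm
  · apply Measure.sub_le_of_le_add
    rw [Measure.le_iff]
    intro t ht
    calc μ t = μ (t ∩ s) + μ (t \ s) := (measure_inter_add_diff t hs).symm
      _ ≤ ((μ.restrict s - ν.restrict s) t + ν (t ∩ s)) + ν (t \ s) := by
          gcongr ?_ + ?_
          · rw [hd_apply t ht,
              tsub_add_cancel_of_le (h1 _ (ht.inter hs) inter_subset_right)]
          · exact h2 _ (ht.diff hs) (diff_subset_compl t s)
      _ = (μ.restrict s - ν.restrict s) t + ν t := by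
          rw [add_assoc, measure_inter_add_diff t hs]
  · apply le_sInf
    intro e he
    rw [Set.mem_setOf_eq] at he
    rw [Measure.le_iff]
    intro t ht
    rw [hd_apply t ht, tsub_le_iff_right]
    calc μ (t ∩ s) ≤ e (t ∩ s) + ν (t ∩ s) := he _
      _ ≤ e t + ν (t ∩ s) := add_le_add_left (measure_mono inter_subset_left) _

/-- On a Hahn set, `(μ - ν) univ = μ s - ν s`. -/
lemma sub_univ_eq (hs : MeasurableSet s)
    [IsFiniteMeasure μ] [IsFiniteMeasure ν]
    (h1 : ∀ t, MeasurableSet t → t ⊆ s → ν t ≤ μ t)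
    (h2 : ∀ t, MeasurableSet t → t ⊆ sᶜ → μ t ≤ ν t) :
    (μ - ν) Set.univ = μ s - ν s := by
  have hle : ν.restrict s ≤ μ.restrict s := by
    rw [Measure.le_iff]
    intro t ht
    rw [Measure.restrict_apply ht, Measure.restrict_apply ht]
    exact h1 _ (ht.inter hs) inter_subset_right
  rw [sub_eq_restrict_sub hs h1 h2, Measure.sub_apply MeasurableSet.univ hle]
  simp [Measure.restrict_apply MeasurableSet.univ]

lemma le_sub_add [IsFiniteMeasure μ] [IsFiniteMeasure ν] : μ ≤ (μ - ν) + ν := by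
  obtain ⟨s, hs, h1, h2⟩ := hahn_decomposition (μ := μ) (ν := ν)
  rw [sub_eq_restrict_sub hs h1 h2]
  have hle : ν.restrict s ≤ μ.restrict s := by
    rw [Measure.le_iff]
    intro t ht
    rw [Measure.restrict_apply ht, Measure.restrict_apply ht]
    exact h1 _ (ht.inter hs) inter_subset_right
  rw [Measure.le_iff]
  intro t ht
  calc μ t = μ (t ∩ s) + μ (t \ s) := (measure_inter_add_diff t hs).symm
    _ ≤ ((μ.restrict s - ν.restrict s) t + ν (t ∩ s)) + ν (t \ s) := by
        gcongr ?_ + ?_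
        · rw [Measure.sub_apply ht hle, Measure.restrict_apply ht, Measure.restrict_apply ht,
            tsub_add_cancel_of_le (h1 _ (ht.inter hs) inter_subset_right)]
        · exact h2 _ (ht.diff hs) (diff_subset_compl t s)
    _ = (μ.restrict s - ν.restrict s) t + ν t := by
        rw [add_assoc, measure_inter_add_diff t hs]

/-- Representation of tvDist on a Hahn set. -/
lemma exists_tv_rep (μ ν : Measure α) [IsFiniteMeasure μ] [IsFiniteMeasure ν] :
    ∃ s, MeasurableSet s ∧
      tvDist μ ν = ((μ s).toReal - (ν s).toReal) + ((ν sᶜ).toReal - (μ sᶜ).toReal) ∧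
      ν s ≤ μ s ∧ μ sᶜ ≤ ν sᶜ := by
  obtain ⟨s, hs, h1, h2⟩ := hahn_decomposition (μ := μ) (ν := ν)
  refine ⟨s, hs, ?_, h1 s hs subset_rfl, h2 sᶜ hs.compl subset_rfl⟩
  have e1 : (μ - ν) Set.univ = μ s - ν s := sub_univ_eq hs h1 h2
  have e2 : (ν - μ) Set.univ = ν sᶜ - μ sᶜ := by
    refine sub_univ_eq hs.compl (fun t ht hts => h2 t ht hts) (fun t ht hts => ?_)
    exact h1 t ht (by rwa [compl_compl] at hts)
  rw [tvDist, e1, e2, ENNReal.toReal_add, ENNReal.toReal_sub_of_le (h1 s hs subset_rfl)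
      (measure_ne_top μ s), ENNReal.toReal_sub_of_le (h2 sᶜ hs.compl subset_rfl)
      (measure_ne_top ν sᶜ)]
  · exact (tsub_le_self.trans_lt (measure_lt_top μ s)).ne
  · exact (tsub_le_self.trans_lt (measure_lt_top ν sᶜ)).ne

/-- Lower bound for tvDist with an arbitrary measurable set. -/
lemma tv_ge (μ ν : Measure α) [IsFiniteMeasure μ] [IsFiniteMeasure ν]
    {T : Set α} (hT : MeasurableSet T) :
    ((μ T).toReal - (ν T).toReal) + ((ν Tᶜ).toReal - (μ Tᶜ).toReal) ≤ tvDist μ ν := by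
  have key : ∀ (μ' ν' : Measure α) [IsFiniteMeasure μ'] [IsFiniteMeasure ν'] (U : Set α),
      (μ' U).toReal - (ν' U).toReal ≤ ((μ' - ν') Set.univ).toReal := by
    intro μ' ν' _ _ U
    have h1 : μ' U - ν' U ≤ (μ' - ν') Set.univ := by
      have : μ' U ≤ (μ' - ν') U + ν' U := le_sub_add U
      calc μ' U - ν' U ≤ (μ' - ν') U := tsub_le_iff_right.mpr this
        _ ≤ (μ' - ν') Set.univ := measure_mono (subset_univ U)
    calc (μ' U).toReal - (ν' U).toReal ≤ ((μ' U) - (ν' U)).toReal :=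
          ENNReal.le_toReal_sub (measure_ne_top ν' U)
      _ ≤ ((μ' - ν') Set.univ).toReal := by
          have hfin : (μ' - ν') Set.univ < ⊤ :=
            lt_of_le_of_lt (Measure.le_iff'.1 Measure.sub_le Set.univ) (measure_lt_top μ' _)
          exact ENNReal.toReal_mono hfin.ne h1
  have := key μ ν T
  have := key ν μ Tᶜ
  rw [tvDist, ENNReal.toReal_add (measure_ne_top _ _) (measure_ne_top _ _)]
  · linarith
  

lemma tv_symm (μ ν : Measure α) : tvDist μ ν = tvDist ν μ := by
  rw [tvDist, tvDist, add_comm]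

lemma tv_self (μ : Measure α) : tvDist μ μ = 0 := by
  simp [tvDist]

lemma tv_triangle (μ ν ρ : Measure α)
    [IsFiniteMeasure μ] [IsFiniteMeasure ν] [IsFiniteMeasure ρ] :
    tvDist μ ρ ≤ tvDist μ ν + tvDist ν ρ := by
  obtain ⟨s, hs, hrep, -, -⟩ := exists_tv_rep μ ρ
  have h1 := tv_ge μ ν hs
  have h2 := tv_ge ν ρ hs
  rw [hrep]
  linarith

/-- Mixture (convexity) bound for tvDist. -/
lemma tv_bind_le {β : Type*} [MeasurableSpace β] (ρ : Measure β) [IsProbabilityMeasure ρ]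
    (κ₁ κ₂ : β → Measure α) (hκ₁ : Measurable κ₁) (hκ₂ : Measurable κ₂)
    (hp₁ : ∀ b, IsProbabilityMeasure (κ₁ b)) (hp₂ : ∀ b, IsProbabilityMeasure (κ₂ b))
    (B : β → ℝ) (hB : Integrable B ρ) (hbound : ∀ b, tvDist (κ₁ b) (κ₂ b) ≤ B b) :
    tvDist (ρ.bind κ₁) (ρ.bind κ₂) ≤ ∫ b, B b ∂ρ := by
  have hprob : ∀ (κ : β → Measure α), Measurable κ → (∀ b, IsProbabilityMeasure (κ b)) →
      IsProbabilityMeasure (ρ.bind κ) := by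
    intro κ hκ hp
    constructor
    rw [Measure.bind_apply MeasurableSet.univ hκ.aemeasurable]
    simp [measure_univ]
  haveI i1 := hprob κ₁ hκ₁ hp₁
  haveI i2 := hprob κ₂ hκ₂ hp₂
  obtain ⟨s, hs, hrep, -, -⟩ := exists_tv_rep (ρ.bind κ₁) (ρ.bind κ₂)
  -- convert the four measure values into integrals
  have key : ∀ (κ : β → Measure α), Measurable κ → (∀ b, IsProbabilityMeasure (κ b)) →
      ∀ t : Set α, MeasurableSet t →
      ((ρ.bind κ) t).toReal = ∫ b, (κ b t).toReal ∂ρ := by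
    intro κ hκ hp t ht
    rw [Measure.bind_apply ht hκ.aemeasurable, ← integral_toReal]
    · exact ((Measure.measurable_coe ht).comp hκ).aemeasurable
    · refine ae_of_all _ fun b => ?_
      exact lt_of_le_of_lt prob_le_one (by norm_num)
  have hintaux : ∀ (κ : β → Measure α), Measurable κ → (∀ b, IsProbabilityMeasure (κ b)) →
      ∀ t : Set α, MeasurableSet t →
      Integrable (fun b => ((κ b) t).toReal) ρ := by
    intro κ hκ hp t ht
    refine Integrable.mono' (integrable_const (1:ℝ))
      ((Measure.measurable_coe ht).comp hκ).ennreal_toReal.aestronglyMeasurable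
      (ae_of_all _ fun b => ?_)
    rw [Real.norm_eq_abs, abs_of_nonneg ENNReal.toReal_nonneg]
    calc ((κ b) t).toReal ≤ (1 : ℝ≥0∞).toReal :=
          ENNReal.toReal_mono (by norm_num) prob_le_one
      _ = 1 := by norm_num
  have I1 := hintaux κ₁ hκ₁ hp₁ s hs
  have I2 := hintaux κ₂ hκ₂ hp₂ s hs
  have I3 := hintaux κ₂ hκ₂ hp₂ sᶜ hs.compl
  have I4 := hintaux κ₁ hκ₁ hp₁ sᶜ hs.compl
  rw [hrep, key κ₁ hκ₁ hp₁ s hs, key κ₂ hκ₂ hp₂ s hs,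
    key κ₁ hκ₁ hp₁ sᶜ hs.compl, key κ₂ hκ₂ hp₂ sᶜ hs.compl]
  have I12 : Integrable (fun b => ((κ₁ b) s).toReal - ((κ₂ b) s).toReal) ρ := I1.sub I2
  have I34 : Integrable (fun b => ((κ₂ b) sᶜ).toReal - ((κ₁ b) sᶜ).toReal) ρ := I3.sub I4
  have I1234 : Integrable (fun b => (((κ₁ b) s).toReal - ((κ₂ b) s).toReal) +
      (((κ₂ b) sᶜ).toReal - ((κ₁ b) sᶜ).toReal)) ρ := I12.add I34
  calc (∫ b, ((κ₁ b) s).toReal ∂ρ - ∫ b, ((κ₂ b) s).toReal ∂ρ) +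
        (∫ b, ((κ₂ b) sᶜ).toReal ∂ρ - ∫ b, ((κ₁ b) sᶜ).toReal ∂ρ)
      = ∫ b, (((κ₁ b) s).toReal - ((κ₂ b) s).toReal +
          (((κ₂ b) sᶜ).toReal - ((κ₁ b) sᶜ).toReal)) ∂ρ := by
        rw [integral_add I12 I34, integral_sub I1 I2, integral_sub I3 I4]
    _ ≤ ∫ b, B b ∂ρ := by
        refine integral_mono I1234 hB fun b => ?_
        haveI := hp₁ b; haveI := hp₂ b
        calc ((κ₁ b s).toReal - (κ₂ b s).toReal) + ((κ₂ b sᶜ).toReal - (κ₁ b sᶜ).toReal)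
            ≤ tvDist (κ₁ b) (κ₂ b) := tv_ge _ _ hs
          _ ≤ B b := hbound b


/-- tvDist of two measures with densities is at most the L¹ distance of the densities. -/
lemma tv_withDensity_le (base : Measure α)
    (p q : α → ℝ) (hp : Measurable p) (hq : Measurable q)
    (hp0 : ∀ x, 0 ≤ p x) (hq0 : ∀ x, 0 ≤ q x)
    (hpi : Integrable p base) (hqi : Integrable q base) :
    tvDist (base.withDensity (fun x => ENNReal.ofReal (p x)))
           (base.withDensity (fun x => ENNReal.ofReal (q x))) ≤
      ∫ x, |p x - q x| ∂base := by
  set μ := base.withDensity (fun x => ENNReal.ofReal (p x)) with hμ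
  set ν := base.withDensity (fun x => ENNReal.ofReal (q x)) with hν
  have hfin : ∀ (r : α → ℝ), Measurable r → (∀ x, 0 ≤ r x) → Integrable r base →
      IsFiniteMeasure (base.withDensity (fun x => ENNReal.ofReal (r x))) := by
    intro r hr hr0 hri
    constructor
    rw [withDensity_apply _ MeasurableSet.univ, Measure.restrict_univ,
      ← ofReal_integral_eq_lintegral_ofReal hri (ae_of_all _ hr0)]
    exact ENNReal.ofReal_lt_top
  haveI := hfin p hp hp0 hpi
  haveI := hfin q hq hq0 hqi
  obtain ⟨s, hs, hrep, -, -⟩ := exists_tv_rep μ ν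
  have happ : ∀ (r : α → ℝ), Measurable r → (∀ x, 0 ≤ r x) → Integrable r base →
      ∀ t : Set α, MeasurableSet t →
      ((base.withDensity (fun x => ENNReal.ofReal (r x))) t).toReal = ∫ x in t, r x ∂base := by
    intro r hr hr0 hri t ht
    rw [withDensity_apply _ ht,
      ← ofReal_integral_eq_lintegral_ofReal hri.restrict (ae_of_all _ hr0),
      ENNReal.toReal_ofReal (setIntegral_nonneg ht (fun x _ => hr0 x))]
  have hpq : Integrable (fun x => |p x - q x|) base := by
    have : Integrable (fun x => p x - q x) base := hpi.sub hqi
    exact this.abs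
  rw [hrep, happ p hp hp0 hpi s hs, happ q hq hq0 hqi s hs,
    happ p hp hp0 hpi sᶜ hs.compl, happ q hq hq0 hqi sᶜ hs.compl,
    ← integral_sub hpi.restrict hqi.restrict, ← integral_sub hqi.restrict hpi.restrict,
    ← integral_add_compl hs hpq]
  have b1 : ∫ x in s, (p x - q x) ∂base ≤ ∫ x in s, |p x - q x| ∂base :=
    setIntegral_mono (hpi.restrict.sub hqi.restrict) hpq.restrict
      (fun x => le_abs_self _)
  have b2 : ∫ x in sᶜ, (q x - p x) ∂base ≤ ∫ x in sᶜ, |p x - q x| ∂base := by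
    refine setIntegral_mono (hqi.restrict.sub hpi.restrict) hpq.restrict
      (fun x => ?_)
    rw [abs_sub_comm]
    exact le_abs_self _
  linarith


open Real in
/-- L¹ distance between two shifted Gaussian densities. -/
lemma gaussian_l1_shift {v : ℝ≥0} (hv : v ≠ 0) (a b : ℝ) (hab : a ≤ b) :
    ∫ x, |gaussianPDFReal a v x - gaussianPDFReal b v x| ≤
      2 * (Real.sqrt (2 * π * v))⁻¹ * (b - a) := by
  set u := b - a with hu
  have hu0 : 0 ≤ u := sub_nonneg.2 hab
  set m := (a + b) / 2 with hm
  set φ : ℝ → ℝ := gaussianPDFReal a v with hφ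
  have Iφ : Integrable φ := integrable_gaussianPDFReal a v
  have Iφb : Integrable (gaussianPDFReal b v) := integrable_gaussianPDFReal b v
  have hv0 : (0:ℝ) < (v:ℝ) := by positivity
  have hb : ∀ x, gaussianPDFReal b v x = φ (x - u) := by
    intro x
    rw [hφ, gaussianPDFReal_sub x u]
    congr 1
    rw [hu]; ring
  -- monotonicity of the gaussian pdf in the squared distance
  have hmono : ∀ c d x : ℝ, (x - c)^2 ≤ (x - d)^2 →
      gaussianPDFReal d v x ≤ gaussianPDFReal c v x := by
    intro c d x h
    simp only [gaussianPDFReal]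
    apply mul_le_mul_of_nonneg_left _ (inv_nonneg.2 (Real.sqrt_nonneg _))
    apply Real.exp_le_exp.2
    have h2v : (0:ℝ) < 2 * (v:ℝ) := by positivity
    exact (div_le_div_iff_of_pos_right h2v).2 (neg_le_neg h)
  have hsign1 : ∀ x : ℝ, x ≤ m → gaussianPDFReal b v x ≤ φ x := by
    intro x hx
    exact hmono a b x (by nlinarith [hx, hab])
  have hsign2 : ∀ x : ℝ, m ≤ x → φ x ≤ gaussianPDFReal b v x := by
    intro x hx
    exact hmono b a x (by nlinarith [hx, hab])
  -- translation of set integrals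
  have trans : ∀ (S T : Set ℝ), MeasurableSet S → MeasurableSet T →
      (∀ x, x ∈ S ↔ x - u ∈ T) →
      ∫ x in S, φ (x - u) ∂volume = ∫ x in T, φ x ∂volume := by
    intro S T hS hT hiff
    rw [← integral_indicator hS, ← integral_indicator hT,
      ← integral_sub_right_eq_self (T.indicator φ) u]
    congr 1; ext x
    by_cases hx : x ∈ S
    · simp [Set.indicator_of_mem hx, Set.indicator_of_mem ((hiff x).1 hx)]
    · simp [Set.indicator_of_notMem hx,
        Set.indicator_of_notMem (fun h => hx ((hiff x).2 h))]
  have hmu : m - u ≤ m := by linarith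
  -- splitting identities
  have hsplit1 : ∫ x in Iic m, φ x ∂volume
      = ∫ x in Iic (m - u), φ x ∂volume + ∫ x in Ioc (m - u) m, φ x ∂volume := by
    rw [← setIntegral_union (Iic_disjoint_Ioc le_rfl) measurableSet_Ioc
      Iφ.integrableOn Iφ.integrableOn, Iic_union_Ioc_eq_Iic hmu]
  have hsplit2 : ∫ x in Ioi (m - u), φ x ∂volume
      = ∫ x in Ioc (m - u) m, φ x ∂volume + ∫ x in Ioi m, φ x ∂volume := by
    rw [← setIntegral_union (Ioc_disjoint_Ioi le_rfl) measurableSet_Ioi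
      Iφ.integrableOn Iφ.integrableOn, Ioc_union_Ioi_eq_Ioi hmu]
  -- the total integral splits into Iic m and Ioi m
  have habs : Integrable (fun x => |φ x - gaussianPDFReal b v x|) := by
    have : Integrable (fun x => φ x - gaussianPDFReal b v x) := Iφ.sub Iφb
    exact this.abs
  have hsplit : ∫ x, |φ x - gaussianPDFReal b v x|
      = (∫ x in Iic m, |φ x - gaussianPDFReal b v x| ∂volume)
        + ∫ x in Ioi m, |φ x - gaussianPDFReal b v x| ∂volume := by
    rw [← compl_Iic, integral_add_compl measurableSet_Iic habs]
  have e1 : ∫ x in Iic m, |φ x - gaussianPDFReal b v x| ∂volume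
      = ∫ x in Ioc (m - u) m, φ x ∂volume := by
    rw [setIntegral_congr_fun measurableSet_Iic
      (fun x hx => abs_of_nonneg (sub_nonneg.2 (hsign1 x hx)))]
    rw [integral_sub Iφ.restrict Iφb.restrict]
    have : ∫ x in Iic m, gaussianPDFReal b v x ∂volume = ∫ x in Iic (m - u), φ x ∂volume := by
      rw [setIntegral_congr_fun measurableSet_Iic (fun x _ => hb x)]
      exact trans _ _ measurableSet_Iic measurableSet_Iic
        (fun x => by simp [sub_le_sub_iff_right])
    rw [this, hsplit1]; ring
  have e2 : ∫ x in Ioi m, |φ x - gaussianPDFReal b v x| ∂volume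
      = ∫ x in Ioc (m - u) m, φ x ∂volume := by
    have heq : Set.EqOn (fun x => |φ x - gaussianPDFReal b v x|)
        (fun x => gaussianPDFReal b v x - φ x) (Ioi m) := fun x hx => by
      simp only []
      rw [abs_sub_comm]
      exact abs_of_nonneg (sub_nonneg.2 (hsign2 x (le_of_lt hx)))
    rw [setIntegral_congr_fun measurableSet_Ioi heq, integral_sub Iφb.restrict Iφ.restrict]
    have : ∫ x in Ioi m, gaussianPDFReal b v x ∂volume = ∫ x in Ioi (m - u), φ x ∂volume := by
      rw [setIntegral_congr_fun measurableSet_Ioi (fun x _ => hb x)]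
      exact trans _ _ measurableSet_Ioi measurableSet_Ioi
        (fun x => by simp [sub_lt_sub_iff_right, lt_sub_iff_add_lt, sub_lt_iff_lt_add])
    rw [this, hsplit2]; ring
  -- bound the middle integral
  have hbound : ∫ x in Ioc (m - u) m, φ x ∂volume ≤ (Real.sqrt (2 * π * v))⁻¹ * u := by
    have hφle : ∀ x ∈ Ioc (m - u) m, φ x ≤ (Real.sqrt (2 * π * v))⁻¹ := by
      intro x _
      rw [hφ]
      simp only [gaussianPDFReal]
      calc (Real.sqrt (2 * π * v))⁻¹ * rexp (-(x - a)^2 / (2 * v))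
          ≤ (Real.sqrt (2 * π * v))⁻¹ * 1 := by
            apply mul_le_mul_of_nonneg_left _ (inv_nonneg.2 (Real.sqrt_nonneg _))
            rw [← Real.exp_zero]
            apply Real.exp_le_exp.2
            apply div_nonpos_of_nonpos_of_nonneg (neg_nonpos.2 (sq_nonneg _))
            positivity
        _ = (Real.sqrt (2 * π * v))⁻¹ := mul_one _
    calc ∫ x in Ioc (m - u) m, φ x ∂volume
        ≤ ∫ _x in Ioc (m - u) m, (Real.sqrt (2 * π * v))⁻¹ ∂volume := by
          apply setIntegral_mono_on Iφ.integrableOn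
            (integrableOn_const measure_Ioc_lt_top.ne) measurableSet_Ioc hφle
      _ = (Real.sqrt (2 * π * v))⁻¹ * u := by
          rw [setIntegral_const, Real.volume_real_Ioc, smul_eq_mul,
            max_eq_left (by linarith : (0:ℝ) ≤ m - (m - u))]
          ring_nf
  calc ∫ x, |φ x - gaussianPDFReal b v x|
      = 2 * ∫ x in Ioc (m - u) m, φ x ∂volume := by rw [hsplit, e1, e2]; ring
    _ ≤ 2 * ((Real.sqrt (2 * π * v))⁻¹ * u) := by linarith
    _ = 2 * (Real.sqrt (2 * π * v))⁻¹ * u := by ring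

open Real in
/-- TV distance between two Gaussians with the same variance. -/
lemma tv_gaussian_le {v : ℝ≥0} (hv : v ≠ 0) (a b : ℝ) :
    tvDist (gaussianReal a v) (gaussianReal b v) ≤
      Real.sqrt (π / 2) / Real.sqrt v * |a - b| := by
  have key : ∀ a b : ℝ, a ≤ b → tvDist (gaussianReal a v) (gaussianReal b v) ≤
      Real.sqrt (π / 2) / Real.sqrt v * |a - b| := by
    intro a b hab
    rw [gaussianReal_of_var_ne_zero _ hv, gaussianReal_of_var_ne_zero _ hv, gaussianPDF_def,
      gaussianPDF_def]
    calc tvDist (volume.withDensity fun x => ENNReal.ofReal (gaussianPDFReal a v x))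
          (volume.withDensity fun x => ENNReal.ofReal (gaussianPDFReal b v x))
        ≤ ∫ x, |gaussianPDFReal a v x - gaussianPDFReal b v x| :=
          tv_withDensity_le volume _ _ (measurable_gaussianPDFReal a v)
            (measurable_gaussianPDFReal b v) (gaussianPDFReal_nonneg a v)
            (gaussianPDFReal_nonneg b v) (integrable_gaussianPDFReal a v)
            (integrable_gaussianPDFReal b v)
      _ ≤ 2 * (Real.sqrt (2 * π * v))⁻¹ * (b - a) := gaussian_l1_shift hv a b hab
      _ ≤ Real.sqrt (π / 2) / Real.sqrt v * |a - b| := by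
          rw [abs_of_nonpos (by linarith : a - b ≤ 0), neg_sub]
          apply mul_le_mul_of_nonneg_right _ (by linarith : (0:ℝ) ≤ b - a)
          have hsv : (0:ℝ) < Real.sqrt v := Real.sqrt_pos.2 (by positivity)
          have h2π : (0:ℝ) < Real.sqrt (2 * π) := Real.sqrt_pos.2 (by positivity)
          rw [Real.sqrt_mul (by positivity : (0:ℝ) ≤ 2 * π) (v:ℝ)]
          rw [mul_inv, ← mul_assoc, div_eq_mul_inv (Real.sqrt (π / 2))]
          apply mul_le_mul_of_nonneg_right _ (inv_nonneg.2 (Real.sqrt_nonneg _))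
          rw [← div_eq_mul_inv, div_le_iff₀ h2π, ← Real.sqrt_mul (by positivity : (0:ℝ) ≤ π / 2)]
          have : π / 2 * (2 * π) = π ^ 2 := by ring
          rw [this, Real.sqrt_sq Real.pi_nonneg]
          exact Real.two_le_pi
  rcases le_total a b with hab | hab
  · exact key a b hab
  · rw [tv_symm, abs_sub_comm]
    exact key b a hab


open Real in
lemma integrable_abs_rpow_gaussian {α : ℝ} (hα : 0 < α) :
    Integrable (fun x : ℝ => |x| ^ α) (gaussianReal 0 1) := by
  rw [gaussianReal_of_var_ne_zero _ one_ne_zero,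
    integrable_withDensity_iff (measurable_gaussianPDF 0 1)
      (ae_of_all _ fun x => ENNReal.ofReal_lt_top)]
  have hpdf : ∀ x, (gaussianPDF 0 1 x).toReal = gaussianPDFReal 0 1 x := fun x =>
    ENNReal.toReal_ofReal (gaussianPDFReal_nonneg _ _ _)
  set n : ℕ := ⌈α⌉₊ with hn
  have hcore : Integrable (fun x : ℝ => x ^ (2*n) * gaussianPDFReal 0 1 x) volume := by
    have hrw : (fun x : ℝ => x ^ (2*n) * gaussianPDFReal 0 1 x)
        = fun x => (Real.sqrt (2*π*((1:ℝ≥0):ℝ)))⁻¹ *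
          (x ^ (((2*n:ℕ)):ℝ) * Real.exp (-(2:ℝ)⁻¹ * x^2)) := by
      ext x
      rw [Real.rpow_natCast]
      simp only [gaussianPDFReal]
      rw [show -(x-0)^2/(2*((1:ℝ≥0):ℝ)) = -(2:ℝ)⁻¹ * x^2 by push_cast; ring]
      ring
    rw [hrw]
    exact (integrable_rpow_mul_exp_neg_mul_sq (by norm_num : (0:ℝ) < 2⁻¹)
      (lt_of_lt_of_le neg_one_lt_zero (Nat.cast_nonneg _) : (-1:ℝ) < ((2*n:ℕ):ℝ))).const_mul _
  have hmaj : Integrable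
      (fun x : ℝ => gaussianPDFReal 0 1 x + x ^ (2*n) * gaussianPDFReal 0 1 x) volume :=
    (integrable_gaussianPDFReal 0 1).add hcore
  refine hmaj.mono' ?_ (ae_of_all _ fun x => ?_)
  · apply Measurable.aestronglyMeasurable
    exact ((measurable_id.abs.pow_const α).mul (measurable_gaussianPDF 0 1).ennreal_toReal)
  · rw [hpdf x, Real.norm_eq_abs,
      abs_of_nonneg (mul_nonneg (Real.rpow_nonneg (abs_nonneg x) α)
        (gaussianPDFReal_nonneg _ _ _))]
    have hxb : |x| ^ α ≤ 1 + x ^ (2*n) := by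
      rcases le_total (|x|) 1 with hx1 | hx1
      · have : |x| ^ α ≤ 1 := Real.rpow_le_one (abs_nonneg x) hx1 hα.le
        have h2 : (0:ℝ) ≤ x ^ (2*n) := by
          rw [pow_mul]
          exact pow_nonneg (sq_nonneg x) n
        linarith
      · have h1 : |x| ^ α ≤ |x| ^ ((2*n:ℕ):ℝ) := by
          apply Real.rpow_le_rpow_of_exponent_le hx1
          have h0 : α ≤ (n:ℝ) := Nat.le_ceil α
          have h2 : (0:ℝ) ≤ (n:ℝ) := Nat.cast_nonneg n
          push_cast
          linarith
        have h2 : |x| ^ ((2*n:ℕ):ℝ) = x ^ (2*n) := by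
          rw [Real.rpow_natCast]
          exact (even_two_mul n).pow_abs x
        have h3 : (0:ℝ) ≤ x ^ (2*n) := by
          rw [pow_mul]; exact pow_nonneg (sq_nonneg x) n
        nlinarith [h1, h2]
    have hp0 : 0 ≤ gaussianPDFReal 0 1 x := gaussianPDFReal_nonneg _ _ _
    calc |x| ^ α * gaussianPDFReal 0 1 x ≤ (1 + x ^ (2*n)) * gaussianPDFReal 0 1 x :=
          mul_le_mul_of_nonneg_right hxb hp0
      _ = gaussianPDFReal 0 1 x + x ^ (2*n) * gaussianPDFReal 0 1 x := by ring


lemma measurable_shift_kernel (μ0 : Measure ℝ) [SFinite μ0] :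
    Measurable (fun u : ℝ => μ0.map (· + u)) := by
  apply Measure.measurable_of_measurable_coe
  intro t ht
  have hA : MeasurableSet {p : ℝ × ℝ | p.1 + p.2 ∈ t} := (measurable_fst.add measurable_snd) ht
  have : ∀ u : ℝ, μ0.map (· + u) t
      = μ0 ((fun y => (y, u)) ⁻¹' {p : ℝ × ℝ | p.1 + p.2 ∈ t}) := by
    intro u
    rw [Measure.map_apply (measurable_add_const u) ht]
    rfl
  simp_rw [this]
  exact measurable_measure_prodMk_right hA

lemma measurable_gauss_kernel (v : ℝ≥0) {β : Type*} [MeasurableSpace β] {h : β → ℝ}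
    (hh : Measurable h) : Measurable (fun x => gaussianReal (h x) v) := by
  apply Measure.measurable_of_measurable_coe
  intro t ht
  have hA : MeasurableSet {p : ℝ × ℝ | p.1 + p.2 ∈ t} := (measurable_fst.add measurable_snd) ht
  have : ∀ x, gaussianReal (h x) v t
      = gaussianReal 0 v ((fun u => (u, h x)) ⁻¹' {p : ℝ × ℝ | p.1 + p.2 ∈ t}) := by
    intro x
    rw [show gaussianReal (h x) v = gaussianReal (0 + h x) v by rw [zero_add],
      ← gaussianReal_map_add_const (h x), Measure.map_apply (measurable_add_const _) ht]
    rfl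
  simp_rw [this]
  exact (measurable_measure_prodMk_right hA).comp hh

lemma bind_shift_eq {β : Type*} [MeasurableSpace β] (μ0 : Measure β) [IsProbabilityMeasure μ0]
    (h : β → ℝ) (hh : Measurable h) (v : ℝ≥0) :
    (gaussianReal 0 v).bind (fun u => (μ0.map h).map (· + u))
      = μ0.bind (fun x => gaussianReal (h x) v) := by
  haveI : IsProbabilityMeasure (μ0.map h) := Measure.isProbabilityMeasure_map hh.aemeasurable
  ext s hs
  set A : Set (ℝ × ℝ) := {p : ℝ × ℝ | p.1 + p.2 ∈ s} with hA
  have hAm : MeasurableSet A := (measurable_fst.add measurable_snd) hs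
  rw [Measure.bind_apply hs (measurable_shift_kernel (μ0.map h)).aemeasurable,
    Measure.bind_apply hs (measurable_gauss_kernel v hh).aemeasurable]
  have lhsEq : ∫⁻ u, (μ0.map h).map (· + u) s ∂(gaussianReal 0 v)
      = ((μ0.map h).prod (gaussianReal 0 v)) A := by
    rw [Measure.prod_apply_symm hAm]
    congr 1
    ext u
    rw [Measure.map_apply (measurable_add_const u) hs]
    rfl
  have rhsEq : ∫⁻ x, gaussianReal (h x) v s ∂μ0
      = ((μ0.map h).prod (gaussianReal 0 v)) A := by
    have hH : Measurable (fun y : ℝ => gaussianReal 0 v (Prod.mk y ⁻¹' A)) :=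
      measurable_measure_prodMk_left hAm
    have step1 : ∀ x, gaussianReal (h x) v s = gaussianReal 0 v (Prod.mk (h x) ⁻¹' A) := by
      intro x
      rw [show gaussianReal (h x) v = gaussianReal (0 + h x) v by rw [zero_add],
        ← gaussianReal_map_add_const (h x), Measure.map_apply (measurable_add_const _) hs]
      congr 1
      ext u
      simp [hA, add_comm]
    simp_rw [step1]
    rw [← lintegral_map hH hh, ← Measure.prod_apply hAm]
  rw [lhsEq, rhsEq]

open Real in
lemma gaussian_moment_scale {α : ℝ} (hα : 0 < α) {σ : ℝ} (hσ : 0 < σ) :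
    Integrable (fun u : ℝ => |u| ^ α) (gaussianReal 0 ⟨σ^2, sq_nonneg σ⟩) ∧
    ∫ u, |u| ^ α ∂(gaussianReal 0 ⟨σ^2, sq_nonneg σ⟩)
      = σ ^ α * ∫ x, |x| ^ α ∂(gaussianReal 0 1) := by
  have hmap : (gaussianReal 0 1).map (fun x => σ * x) = gaussianReal 0 ⟨σ^2, sq_nonneg σ⟩ := by
    have := gaussianReal_map_const_mul (μ := 0) (v := 1) σ
    simp at this
    exact this
  have hcomp : (fun u : ℝ => |u| ^ α) ∘ (fun x => σ * x) = fun x => σ ^ α * |x| ^ α := by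
    ext x
    simp only [Function.comp]
    rw [abs_mul, Real.mul_rpow (abs_nonneg σ) (abs_nonneg x), abs_of_pos hσ]
  have hintc : Integrable (fun x : ℝ => σ ^ α * |x| ^ α) (gaussianReal 0 1) :=
    (integrable_abs_rpow_gaussian hα).const_mul _
  have hmeas : AEStronglyMeasurable (fun u : ℝ => |u| ^ α)
      ((gaussianReal 0 1).map (fun x => σ * x)) :=
    (measurable_id.abs.pow_const α).aestronglyMeasurable
  constructor
  · rw [← hmap, integrable_map_measure hmeas (measurable_const_mul σ).aemeasurable, hcomp]
    exact hintc
  · rw [← hmap, integral_map (measurable_const_mul σ).aemeasurable hmeas]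
    simp_rw [show ∀ x : ℝ, |σ * x| ^ α = σ ^ α * |x| ^ α from fun x => by
      rw [abs_mul, Real.mul_rpow (abs_nonneg σ) (abs_nonneg x), abs_of_pos hσ]]
    rw [MeasureTheory.integral_const_mul]

end TVAux

open TVAux in
/-- **Theorem 1.** If the distributions of `f(X)` and `g(X)` are Hölder-continuous of order `α`
under translations (in total variation), then
`‖P_{f(X)} - P_{g(X)}‖_var ≤ C ‖f - g‖₁^{α/(α+1)}`, where
`C = (C_f + C_g)^{1/(α+1)} (E|ν|^α + √(π/2))` and `ν` is a standard Gaussian. -/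
theorem stmt0 {d : ℕ} {Ω : Type*} [MeasurableSpace Ω] (P : Measure Ω) [IsProbabilityMeasure P]
    (X : Ω → (Fin d → ℝ)) (hX : Measurable X)
    (habs : P.map X ≪ (volume : Measure (Fin d → ℝ)))
    (f g : (Fin d → ℝ) → ℝ) (hf : Measurable f) (hg : Measurable g)
    (α : ℝ) (hα : 0 < α) (Cf Cg : ℝ) (hCf : 0 ≤ Cf) (hCg : 0 ≤ Cg)
    (h1 : ∀ u : ℝ,
      tvDist (P.map (fun ω => f (X ω))) (P.map (fun ω => f (X ω) + u)) ≤ Cf * |u| ^ α)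
    (h2 : ∀ u : ℝ,
      tvDist (P.map (fun ω => g (X ω))) (P.map (fun ω => g (X ω) + u)) ≤ Cg * |u| ^ α)
    (hint : Integrable (fun x => f x - g x) (P.map X)) :
    tvDist (P.map (fun ω => f (X ω))) (P.map (fun ω => g (X ω))) ≤
      (Cf + Cg) ^ (1 / (α + 1)) *
        ((∫ x, |x| ^ α ∂(gaussianReal 0 1)) + Real.sqrt (Real.pi / 2)) *
        (∫ x, |f x - g x| ∂(P.map X)) ^ (α / (α + 1)) := by
  have hfX : Measurable (fun ω => f (X ω)) := hf.comp hX
  have hgX : Measurable (fun ω => g (X ω)) := hg.comp hX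
  set μX : Measure (Fin d → ℝ) := P.map X with hμX
  set μF : Measure ℝ := P.map (fun ω => f (X ω)) with hμF
  set μG : Measure ℝ := P.map (fun ω => g (X ω)) with hμG
  haveI : IsProbabilityMeasure μX := Measure.isProbabilityMeasure_map hX.aemeasurable
  haveI : IsProbabilityMeasure μF := Measure.isProbabilityMeasure_map hfX.aemeasurable
  haveI : IsProbabilityMeasure μG := Measure.isProbabilityMeasure_map hgX.aemeasurable
  set E : ℝ := ∫ x, |x| ^ α ∂(gaussianReal 0 1) with hE
  have hE0 : 0 ≤ E := integral_nonneg fun x => Real.rpow_nonneg (abs_nonneg x) α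
  set Δ : ℝ := ∫ x, |f x - g x| ∂μX with hΔ
  have hΔ0 : 0 ≤ Δ := integral_nonneg fun x => abs_nonneg _
  set C : ℝ := Cf + Cg with hC
  have hC0 : 0 ≤ C := add_nonneg hCf hCg
  set K : ℝ := Real.sqrt (Real.pi / 2) with hK
  have hK0 : 0 < K := Real.sqrt_pos.2 (by positivity)
  have hμFX : μF = μX.map f := by
    rw [hμF, hμX, Measure.map_map hf hX]; rfl
  have hμGX : μG = μX.map g := by
    rw [hμG, hμX, Measure.map_map hg hX]; rfl
  have hα1 : (0:ℝ) < α + 1 := by linarith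
  -- Main inequality, for every σ > 0
  have MAIN : ∀ σ : ℝ, 0 < σ → tvDist μF μG ≤ C * σ ^ α * E + K * Δ / σ := by
    intro σ hσ
    set v : ℝ≥0 := ⟨σ^2, sq_nonneg σ⟩ with hv
    have hv0 : v ≠ 0 := by
      rw [← NNReal.coe_ne_zero]
      show (σ^2 : ℝ) ≠ 0
      positivity
    set γ : Measure ℝ := gaussianReal 0 v with hγ
    haveI : IsProbabilityMeasure γ := by rw [hγ]; infer_instance
    obtain ⟨hMint, hMval⟩ := gaussian_moment_scale hα hσ
    set νF : Measure ℝ := μX.bind (fun x => gaussianReal (f x) v) with hνF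
    set νG : Measure ℝ := μX.bind (fun x => gaussianReal (g x) v) with hνG
    have hprobbind : ∀ (h' : (Fin d → ℝ) → ℝ), Measurable h' →
        IsProbabilityMeasure (μX.bind (fun x => gaussianReal (h' x) v)) := by
      intro h' hh'
      constructor
      rw [Measure.bind_apply MeasurableSet.univ (measurable_gauss_kernel v hh').aemeasurable]
      simp [measure_univ]
    haveI iF : IsProbabilityMeasure νF := hprobbind f hf
    haveI iG : IsProbabilityMeasure νG := hprobbind g hg
    have hconstF : γ.bind (fun _ => μF) = μF := by
      rw [Measure.bind_const, measure_univ, one_smul]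
    have hconstG : γ.bind (fun _ => μG) = μG := by
      rw [Measure.bind_const, measure_univ, one_smul]
    have hrepF : γ.bind (fun u => μF.map (· + u)) = νF := by
      rw [hμFX, hνF, hγ]; exact bind_shift_eq μX f hf v
    have hrepG : γ.bind (fun u => μG.map (· + u)) = νG := by
      rw [hμGX, hνG, hγ]; exact bind_shift_eq μX g hg v
    -- Term 1
    have T1 : tvDist μF νF ≤ Cf * (σ ^ α * E) := by
      have hb := tv_bind_le γ (fun _ => μF) (fun u => μF.map (· + u))
        measurable_const (measurable_shift_kernel μF)
        (fun _ => inferInstance)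
        (fun u => Measure.isProbabilityMeasure_map (measurable_add_const u).aemeasurable)
        (fun u => Cf * |u| ^ α) (hMint.const_mul Cf)
        (fun u => by
          show tvDist μF (μF.map (· + u)) ≤ Cf * |u| ^ α
          have hmm : μF.map (· + u) = P.map (fun ω => f (X ω) + u) := by
            rw [hμF, Measure.map_map (measurable_add_const u) hfX]
            rfl
          rw [hmm]
          exact h1 u)
      rw [hconstF, hrepF] at hb
      calc tvDist μF νF ≤ ∫ u, Cf * |u| ^ α ∂γ := hb
        _ = Cf * ∫ u, |u| ^ α ∂γ := MeasureTheory.integral_const_mul _ _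
        _ = Cf * (σ ^ α * E) := by rw [hγ, hv, hMval]
    -- Term 3
    have T3 : tvDist μG νG ≤ Cg * (σ ^ α * E) := by
      have hb := tv_bind_le γ (fun _ => μG) (fun u => μG.map (· + u))
        measurable_const (measurable_shift_kernel μG)
        (fun _ => inferInstance)
        (fun u => Measure.isProbabilityMeasure_map (measurable_add_const u).aemeasurable)
        (fun u => Cg * |u| ^ α) (hMint.const_mul Cg)
        (fun u => by
          show tvDist μG (μG.map (· + u)) ≤ Cg * |u| ^ α
          have hmm : μG.map (· + u) = P.map (fun ω => g (X ω) + u) := by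
            rw [hμG, Measure.map_map (measurable_add_const u) hgX]
            rfl
          rw [hmm]
          exact h2 u)
      rw [hconstG, hrepG] at hb
      calc tvDist μG νG ≤ ∫ u, Cg * |u| ^ α ∂γ := hb
        _ = Cg * ∫ u, |u| ^ α ∂γ := MeasureTheory.integral_const_mul _ _
        _ = Cg * (σ ^ α * E) := by rw [hγ, hv, hMval]
    -- Term 2 (middle)
    have hsqv : Real.sqrt (v : ℝ) = σ := by
      rw [show ((v : ℝ)) = σ^2 from rfl, Real.sqrt_sq hσ.le]
    have habsint : Integrable (fun x => |f x - g x|) μX := by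
      have : Integrable (fun x => f x - g x) μX := hint
      exact this.abs
    have T2 : tvDist νF νG ≤ K / σ * Δ := by
      have hb := tv_bind_le μX (fun x => gaussianReal (f x) v) (fun x => gaussianReal (g x) v)
        (measurable_gauss_kernel v hf) (measurable_gauss_kernel v hg)
        (fun _ => inferInstance) (fun _ => inferInstance)
        (fun x => K / σ * |f x - g x|) (habsint.const_mul _)
        (fun x => by
          show tvDist (gaussianReal (f x) v) (gaussianReal (g x) v) ≤ K / σ * |f x - g x|
          have := tv_gaussian_le hv0 (f x) (g x)
          rw [hsqv] at this
          calc tvDist (gaussianReal (f x) v) (gaussianReal (g x) v)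
              ≤ K / σ * |f x - g x| := by rw [hK]; exact this)
      calc tvDist νF νG ≤ ∫ x, K / σ * |f x - g x| ∂μX := hb
        _ = K / σ * Δ := by rw [MeasureTheory.integral_const_mul, hΔ]
    -- combine
    have tri1 := tv_triangle μF νF μG
    have tri2 := tv_triangle νF νG μG
    have hsymm : tvDist νG μG = tvDist μG νG := tv_symm _ _
    calc tvDist μF μG ≤ tvDist μF νF + (tvDist νF νG + tvDist νG μG) := by linarith
      _ ≤ Cf * (σ ^ α * E) + (K / σ * Δ + Cg * (σ ^ α * E)) := by
          rw [hsymm] at *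
          linarith
      _ = C * σ ^ α * E + K * Δ / σ := by rw [hC]; ring
  -- Conclude
  have hRHS : C ^ (1 / (α + 1)) * (E + K) * Δ ^ (α / (α + 1))
      = (Cf + Cg) ^ (1 / (α + 1)) * (E + K) * Δ ^ (α / (α + 1)) := by rw [hC]
  rcases eq_or_lt_of_le hC0 with hCz | hCpos
  · -- C = 0
    have hL : tvDist μF μG ≤ 0 := by
      refine le_of_forall_pos_le_add fun ε hε => ?_
      have hσ : (0:ℝ) < (K * Δ + 1) / ε := div_pos (by nlinarith) hε
      calc tvDist μF μG ≤ C * ((K * Δ + 1) / ε) ^ α * E + K * Δ / ((K * Δ + 1) / ε) :=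
            MAIN _ hσ
        _ = K * Δ * ε / (K * Δ + 1) := by
            rw [← hCz]
            field_simp
            ring
        _ ≤ 0 + ε := by
            rw [zero_add, div_le_iff₀ (by nlinarith : (0:ℝ) < K * Δ + 1)]
            nlinarith
    calc tvDist μF μG ≤ 0 := hL
      _ ≤ (Cf + Cg) ^ (1 / (α + 1)) * (E + K) * Δ ^ (α / (α + 1)) := by
          rw [← hC, ← hCz, Real.zero_rpow (by positivity : 1 / (α + 1) ≠ 0), zero_mul, zero_mul]
  rcases eq_or_lt_of_le hΔ0 with hΔz | hΔpos
  · -- Δ = 0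
    have hL : tvDist μF μG ≤ 0 := by
      refine le_of_forall_pos_le_add fun ε hε => ?_
      have hce : (0:ℝ) < C * E + 1 := by nlinarith
      have hdp : (0:ℝ) < ε / (C * E + 1) := div_pos hε hce
      set σ : ℝ := (ε / (C * E + 1)) ^ (1 / α) with hσdef
      have hσ : 0 < σ := Real.rpow_pos_of_pos hdp _
      have hσα : σ ^ α = ε / (C * E + 1) := by
        rw [hσdef, ← Real.rpow_mul hdp.le, one_div_mul_cancel hα.ne', Real.rpow_one]
      calc tvDist μF μG ≤ C * σ ^ α * E + K * Δ / σ := MAIN σ hσ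
        _ = C * E * (ε / (C * E + 1)) := by rw [hσα, ← hΔz]; ring
        _ ≤ 0 + ε := by
            rw [zero_add]
            rw [mul_div_assoc'] at *
            rw [div_le_iff₀ hce]
            nlinarith
    calc tvDist μF μG ≤ 0 := hL
      _ ≤ (Cf + Cg) ^ (1 / (α + 1)) * (E + K) * Δ ^ (α / (α + 1)) := by
          rw [← hΔz, Real.zero_rpow (by positivity : α / (α + 1) ≠ 0), mul_zero]
  -- main case: C > 0 and Δ > 0
  set t : ℝ := 1 / (α + 1) with ht
  set s : ℝ := α / (α + 1) with hs
  have hts : t * α = s := by rw [ht, hs]; ring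
  have h1s : 1 - s = t := by rw [ht, hs]; field_simp; ring
  have hst1 : s + t = 1 := by rw [ht, hs]; field_simp
  set σ : ℝ := (Δ / C) ^ t with hσdef
  have hdc : (0:ℝ) < Δ / C := div_pos hΔpos hCpos
  have hσ : 0 < σ := Real.rpow_pos_of_pos hdc _
  have hσα : σ ^ α = Δ ^ s / C ^ s := by
    rw [hσdef, ← Real.rpow_mul hdc.le, hts, Real.div_rpow hΔ0 hC0]
  have e1 : C * σ ^ α = C ^ t * Δ ^ s := by
    rw [hσα, ← h1s, Real.rpow_sub hCpos, Real.rpow_one]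
    field_simp
  have e2 : Δ / σ = C ^ t * Δ ^ s := by
    rw [hσdef, Real.div_rpow hΔ0 hC0, div_div_eq_mul_div,
      div_eq_iff (Real.rpow_pos_of_pos hΔpos t).ne', mul_assoc,
      ← Real.rpow_add hΔpos, hst1, Real.rpow_one]
    ring
  calc tvDist μF μG ≤ C * σ ^ α * E + K * Δ / σ := MAIN σ hσ
    _ = C ^ t * (E + K) * Δ ^ s := by
        rw [mul_div_assoc, e1, e2]; ring
    _ = (Cf + Cg) ^ (1 / (α + 1)) * (E + K) * Δ ^ (α / (α + 1)) := by rw [hC, ht, hs]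
end

section
/- Let f(x) = Σ_{k=1}^n (a_k cos kx + b_k sin kx) be a trigonometric polynomial of degree at most n (with zero constant term). If all derivatives of f of orders 1 through 2n vanish at the point x = 0, i.e. f^{(l)}(0) = 0 for l = 1, …, 2n, then all coefficients vanish: a_k = b_k = 0 for all k = 1, …, n. Consequently, a non-constant trigonometric polynomial of degree n can have at most its first 2n − 1 derivatives vanish at any fixed point. -/
open Real

lemma itd_sin_even (m : ℕ) (x : ℝ) :
    iteratedDeriv (2*m) Real.sin x = (-1:ℝ)^m * Real.sin x := by
  induction m generalizing x with
  | zero => simp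
  | succ m ih =>
    have h2 : 2*(m+1) = (2*m) + 1 + 1 := by ring
    rw [h2, iteratedDeriv_succ', iteratedDeriv_succ', Real.deriv_sin, Real.deriv_cos']
    rw [iteratedDeriv_fun_neg]
    rw [ih]
    ring

lemma itd_cos_even (m : ℕ) (x : ℝ) :
    iteratedDeriv (2*m) Real.cos x = (-1:ℝ)^m * Real.cos x := by
  induction m generalizing x with
  | zero => simp
  | succ m ih =>
    have h2 : 2*(m+1) = (2*m) + 1 + 1 := by ring
    rw [h2, iteratedDeriv_succ', iteratedDeriv_succ', Real.deriv_cos']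
    have : deriv (fun x => -Real.sin x) = fun x => -Real.cos x := by
      funext y; simp
    rw [this, iteratedDeriv_fun_neg, ih]
    ring

lemma itd_sin_odd (m : ℕ) (x : ℝ) :
    iteratedDeriv (2*m+1) Real.sin x = (-1:ℝ)^m * Real.cos x := by
  rw [iteratedDeriv_succ', Real.deriv_sin, itd_cos_even]

lemma itd_cos_odd (m : ℕ) (x : ℝ) :
    iteratedDeriv (2*m+1) Real.cos x = -((-1:ℝ)^m * Real.sin x) := by
  rw [iteratedDeriv_succ', Real.deriv_cos', iteratedDeriv_fun_neg, itd_sin_even]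

lemma itd_add (l : ℕ) {f g : ℝ → ℝ} (hf : ContDiff ℝ l f) (hg : ContDiff ℝ l g) (x : ℝ) :
    iteratedDeriv l (fun y => f y + g y) x = iteratedDeriv l f x + iteratedDeriv l g x := by
  rw [← iteratedDerivWithin_univ, ← iteratedDerivWithin_univ, ← iteratedDerivWithin_univ]
  exact iteratedDerivWithin_add (Set.mem_univ x) uniqueDiffOn_univ hf.contDiffWithinAt hg.contDiffWithinAt

lemma itd_smul (l : ℕ) (a : ℝ) {f : ℝ → ℝ} (hf : ContDiff ℝ l f) (x : ℝ) :
    iteratedDeriv l (fun y => a * f y) x = a * iteratedDeriv l f x := by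
  rw [← iteratedDerivWithin_univ, ← iteratedDerivWithin_univ]
  exact iteratedDerivWithin_const_mul (Set.mem_univ x) uniqueDiffOn_univ a hf.contDiffWithinAt

lemma itd_sum {ι : Type*} (s : Finset ι) (F : ι → ℝ → ℝ) (l : ℕ)
    (hF : ∀ i ∈ s, ContDiff ℝ l (F i)) (x : ℝ) :
    iteratedDeriv l (fun y => ∑ i ∈ s, F i y) x = ∑ i ∈ s, iteratedDeriv l (F i) x := by
  classical
  induction s using Finset.induction with
  | empty =>
    simp only [Finset.sum_empty]
    rcases Nat.eq_zero_or_pos l with rfl | hl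
    · simp
    · simp [iteratedDeriv_eq_iteratedFDeriv, iteratedFDeriv_const_of_ne hl.ne' (0:ℝ)]
  | insert _ _ hi ih =>
    rename_i j s
    have h1 : (fun y => ∑ i ∈ insert j s, F i y)
        = fun y => F j y + ∑ i ∈ s, F i y := by
      funext y; rw [Finset.sum_insert hi]
    rw [h1, itd_add l (hF j (Finset.mem_insert_self j s))
      (ContDiff.sum fun i hi' => hF i (Finset.mem_insert_of_mem hi')),
      ih (fun i hi' => hF i (Finset.mem_insert_of_mem hi')), Finset.sum_insert hi]

lemma contdiff_coscx (l : ℕ) (c : ℝ) : ContDiff ℝ l (fun x : ℝ => Real.cos (c * x)) :=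
  Real.contDiff_cos.comp (contDiff_const.mul contDiff_id)

lemma contdiff_sincx (l : ℕ) (c : ℝ) : ContDiff ℝ l (fun x : ℝ => Real.sin (c * x)) :=
  Real.contDiff_sin.comp (contDiff_const.mul contDiff_id)

lemma term_itd (l : ℕ) (ak bk c : ℝ) :
    iteratedDeriv l (fun x => ak * Real.cos (c*x) + bk * Real.sin (c*x)) 0
      = ak * (c^l * iteratedDeriv l Real.cos 0) + bk * (c^l * iteratedDeriv l Real.sin 0) := by
  have hc : ContDiff ℝ l (fun x : ℝ => ak * Real.cos (c*x)) :=
    contDiff_const.mul (contdiff_coscx l c)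
  have hs : ContDiff ℝ l (fun x : ℝ => bk * Real.sin (c*x)) :=
    contDiff_const.mul (contdiff_sincx l c)
  rw [itd_add l hc hs 0, itd_smul l ak (contdiff_coscx l c) 0,
    itd_smul l bk (contdiff_sincx l c) 0,
    iteratedDeriv_comp_const_mul Real.contDiff_cos c,
    iteratedDeriv_comp_const_mul Real.contDiff_sin c]
  simp

lemma moments (n : ℕ) (d : ℕ → ℝ)
    (hm : ∀ m < n, ∑ k ∈ Finset.Icc 1 n, d k * ((k:ℝ)^2)^m = 0) :
    ∀ k ∈ Finset.Icc 1 n, d k = 0 := by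
  intro k0 hk0
  set v : ℕ → ℝ := fun k => (k:ℝ)^2 with hv
  have hinj : Set.InjOn v (Finset.Icc 1 n) := by
    intro i _ j _ hij
    have hij' : (i:ℝ)^2 = (j:ℝ)^2 := hij
    have : (i:ℝ) = (j:ℝ) := by
      have h1 : (0:ℝ) ≤ (i:ℝ) := Nat.cast_nonneg i
      have h2 : (0:ℝ) ≤ (j:ℝ) := Nat.cast_nonneg j
      nlinarith [sq_nonneg ((i:ℝ) - (j:ℝ)), sq_nonneg ((i:ℝ) + (j:ℝ))]
    exact_mod_cast this
  set p := Lagrange.basis (Finset.Icc 1 n) v k0 with hp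
  have hn1 : 1 ≤ n := by
    have := Finset.mem_Icc.mp hk0; omega
  have hdeg : p.natDegree < n := by
    rw [hp, Lagrange.natDegree_basis hinj hk0, Nat.card_Icc]; omega
  have key : ∑ k ∈ Finset.Icc 1 n, d k * p.eval (v k) = d k0 := by
    rw [Finset.sum_eq_single k0]
    · rw [Lagrange.eval_basis_self hinj hk0, mul_one]
    · intro k hk hne
      rw [Lagrange.eval_basis_of_ne hne.symm hk, mul_zero]
    · intro hk; exact absurd hk0 hk
  have heval : ∀ k : ℕ, p.eval (v k) = ∑ m ∈ Finset.range n, p.coeff m * (v k)^m :=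
    fun k => Polynomial.eval_eq_sum_range' hdeg (v k)
  rw [← key]
  simp_rw [heval, Finset.mul_sum]
  rw [Finset.sum_comm]
  refine Finset.sum_eq_zero fun m hm' => ?_
  have : ∑ k ∈ Finset.Icc 1 n, d k * (p.coeff m * v k ^ m)
      = p.coeff m * ∑ k ∈ Finset.Icc 1 n, d k * (v k)^m := by
    rw [Finset.mul_sum]; exact Finset.sum_congr rfl fun k _ => by ring
  rw [this, hm m (Finset.mem_range.mp hm'), mul_zero]

/-- If all derivatives of orders `1, …, 2n` of the trigonometric polynomial
`f(x) = ∑_{k=1}^n (a_k cos kx + b_k sin kx)` (zero constant term) vanish at `x = 0`,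
then all coefficients vanish: `a_k = b_k = 0` for `k = 1, …, n`. -/
theorem stmt8 (n : ℕ) (a b : ℕ → ℝ)
    (h : ∀ l : ℕ, 1 ≤ l → l ≤ 2 * n →
      iteratedDeriv l
        (fun x : ℝ => ∑ k ∈ Finset.Icc 1 n,
          (a k * Real.cos ((k : ℝ) * x) + b k * Real.sin ((k : ℝ) * x))) 0 = 0) :
    ∀ k : ℕ, 1 ≤ k → k ≤ n → a k = 0 ∧ b k = 0 := by
  intro k hk1 hkn
  have hk : k ∈ Finset.Icc 1 n := Finset.mem_Icc.mpr ⟨hk1, hkn⟩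
  have hF : ∀ l : ℕ,
      iteratedDeriv l
        (fun x : ℝ => ∑ k ∈ Finset.Icc 1 n,
          (a k * Real.cos ((k : ℝ) * x) + b k * Real.sin ((k : ℝ) * x))) 0
      = ∑ j ∈ Finset.Icc 1 n,
          (a j * ((j:ℝ)^l * iteratedDeriv l Real.cos 0)
            + b j * ((j:ℝ)^l * iteratedDeriv l Real.sin 0)) := by
    intro l
    rw [itd_sum (Finset.Icc 1 n)
      (fun j x => a j * Real.cos ((j:ℝ)*x) + b j * Real.sin ((j:ℝ)*x)) l
      (fun j _ => (contDiff_const.mul (contdiff_coscx l (j:ℝ))).add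
        (contDiff_const.mul (contdiff_sincx l (j:ℝ)))) 0]
    exact Finset.sum_congr rfl fun j _ => term_itd l (a j) (b j) (j:ℝ)
  have hA : ∀ m < n, ∑ j ∈ Finset.Icc 1 n, (a j * (j:ℝ)^2) * ((j:ℝ)^2)^m = 0 := by
    intro m hmn
    have h1 := h (2*(m+1)) (by omega) (by omega)
    rw [hF (2*(m+1))] at h1
    have hc : iteratedDeriv (2*(m+1)) Real.cos 0 = (-1:ℝ)^(m+1) := by
      rw [itd_cos_even]; simp
    have hs : iteratedDeriv (2*(m+1)) Real.sin 0 = 0 := by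
      rw [itd_sin_even]; simp
    rw [hc, hs] at h1
    have hsq : ((-1:ℝ)^(m+1)) * ((-1:ℝ)^(m+1)) = 1 := by
      rw [← pow_add]
      exact (neg_one_pow_eq_one_iff_even (by norm_num)).mpr ⟨m+1, rfl⟩
    have h2 : ∑ j ∈ Finset.Icc 1 n, a j * (j:ℝ)^(2*(m+1)) = 0 := by
      have h3 := congrArg (fun t => (-1:ℝ)^(m+1) * t) h1
      simp only [mul_zero, Finset.mul_sum] at h3
      rw [← h3]
      refine Finset.sum_congr rfl fun j _ => ?_
      calc a j * (j:ℝ)^(2*(m+1))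
          = (a j * (j:ℝ)^(2*(m+1))) * ((-1:ℝ)^(m+1) * (-1:ℝ)^(m+1)) := by
            rw [hsq, mul_one]
        _ = (-1:ℝ)^(m+1) * (a j * ((j:ℝ)^(2*(m+1)) * (-1:ℝ)^(m+1)) + 0) := by ring
    rw [← h2]
    refine Finset.sum_congr rfl fun j _ => ?_
    ring
  have hB : ∀ m < n, ∑ j ∈ Finset.Icc 1 n, (b j * (j:ℝ)) * ((j:ℝ)^2)^m = 0 := by
    intro m hmn
    have h1 := h (2*m+1) (by omega) (by omega)
    rw [hF (2*m+1)] at h1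
    have hc : iteratedDeriv (2*m+1) Real.cos 0 = 0 := by
      rw [itd_cos_odd]; simp
    have hs : iteratedDeriv (2*m+1) Real.sin 0 = (-1:ℝ)^m := by
      rw [itd_sin_odd]; simp
    rw [hc, hs] at h1
    have hsq : ((-1:ℝ)^m) * ((-1:ℝ)^m) = 1 := by
      rw [← pow_add]
      exact (neg_one_pow_eq_one_iff_even (by norm_num)).mpr ⟨m, rfl⟩
    have h2 : ∑ j ∈ Finset.Icc 1 n, b j * (j:ℝ)^(2*m+1) = 0 := by
      have h3 := congrArg (fun t => (-1:ℝ)^m * t) h1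
      simp only [mul_zero, Finset.mul_sum] at h3
      rw [← h3]
      refine Finset.sum_congr rfl fun j _ => ?_
      calc b j * (j:ℝ)^(2*m+1)
          = (b j * (j:ℝ)^(2*m+1)) * ((-1:ℝ)^m * (-1:ℝ)^m) := by
            rw [hsq, mul_one]
        _ = (-1:ℝ)^m * (0 + b j * ((j:ℝ)^(2*m+1) * (-1:ℝ)^m)) := by ring
    rw [← h2]
    refine Finset.sum_congr rfl fun j _ => ?_
    ring
  have hkpos : (0:ℝ) < (k:ℝ) := by exact_mod_cast hk1
  have ha := moments n (fun j => a j * (j:ℝ)^2) hA k hk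
  have hb := moments n (fun j => b j * (j:ℝ)) hB k hk
  constructor
  · have : (k:ℝ)^2 ≠ 0 := by positivity
    exact (mul_eq_zero.mp ha).resolve_right this
  · exact (mul_eq_zero.mp hb).resolve_right hkpos.ne'
end

section
/- Let σ > 0 and let μ_a and μ_b be the Gaussian measures on ℝ with means a and b respectively and common variance σ². Then ‖μ_a − μ_b‖_var ≤ (2/(σ·√(2π)))·|a − b|. -/
open MeasureTheory ProbabilityTheory
open scoped NNReal ENNReal Real

lemma tvDist_comm {α : Type*} [MeasurableSpace α] (μ ν : Measure α) :
    tvDist μ ν = tvDist ν μ := by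
  unfold tvDist; rw [add_comm]

/-- `(μ - ν)(univ) ≤ μ s - ν s` when `ν ≤ μ` on `s` and `μ ≤ ν` on `sᶜ`. -/
lemma sub_univ_le {α : Type*} [MeasurableSpace α] (μ ν : Measure α) [IsFiniteMeasure ν]
    {s : Set α} (hs : MeasurableSet s)
    (h1 : ν.restrict s ≤ μ.restrict s) (h2 : μ.restrict sᶜ ≤ ν.restrict sᶜ) :
    (μ - ν) Set.univ ≤ μ s - ν s := by
  have key : μ ≤ (μ.restrict s - ν.restrict s) + ν := by
    rw [Measure.le_iff]
    intro t ht
    have hsub : (μ.restrict s - ν.restrict s) t = μ.restrict s t - ν.restrict s t :=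
      Measure.sub_apply ht h1
    have hts : ν (t ∩ s) ≤ μ (t ∩ s) := by
      have := Measure.le_iff'.1 h1 t
      rwa [Measure.restrict_apply ht, Measure.restrict_apply ht] at this
    have htsc : μ (t \ s) ≤ ν (t \ s) := by
      have := Measure.le_iff'.1 h2 t
      rwa [Measure.restrict_apply ht, Measure.restrict_apply ht, ← Set.diff_eq] at this
    rw [Measure.add_apply, hsub, Measure.restrict_apply ht, Measure.restrict_apply ht]
    calc μ t = μ (t ∩ s) + μ (t \ s) := (measure_inter_add_diff t hs).symm
      _ ≤ μ (t ∩ s) + ν (t \ s) := add_le_add le_rfl htsc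
      _ = (μ (t ∩ s) - ν (t ∩ s)) + ν (t ∩ s) + ν (t \ s) := by
          rw [tsub_add_cancel_of_le hts]
      _ = (μ (t ∩ s) - ν (t ∩ s)) + (ν (t ∩ s) + ν (t \ s)) := by ring
      _ = (μ (t ∩ s) - ν (t ∩ s)) + ν t := by rw [measure_inter_add_diff t hs]
  have hle := Measure.le_iff'.1 (Measure.sub_le_of_le_add key) Set.univ
  rwa [Measure.sub_apply MeasurableSet.univ h1, Measure.restrict_apply MeasurableSet.univ,
    Measure.restrict_apply MeasurableSet.univ, Set.univ_inter] at hle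

lemma gaussianPDF_le_gaussianPDF {a b x : ℝ} {v : ℝ≥0} (hv : (0:ℝ) < v)
    (h : (x - a) ^ 2 ≤ (x - b) ^ 2) :
    gaussianPDF b v x ≤ gaussianPDF a v x := by
  unfold gaussianPDF
  apply ENNReal.ofReal_le_ofReal
  unfold gaussianPDFReal
  have h2v : (0:ℝ) < 2 * v := by linarith
  refine mul_le_mul_of_nonneg_left (Real.exp_le_exp.2 ?_) (by positivity)
  exact (div_le_div_iff_of_pos_right h2v).2 (by linarith)

set_option maxHeartbeats 2000000 in
lemma key_le (σ : ℝ) (hσ : 0 < σ) (a b : ℝ) (hab : a ≤ b) :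
    tvDist (gaussianReal a ⟨σ ^ 2, sq_nonneg σ⟩) (gaussianReal b ⟨σ ^ 2, sq_nonneg σ⟩) ≤
      2 / (σ * Real.sqrt (2 * Real.pi)) * |a - b| := by
  set v : ℝ≥0 := ⟨σ ^ 2, sq_nonneg σ⟩ with hv_def
  have hv0 : (0:ℝ) < v := by rw [hv_def]; exact pow_pos hσ 2
  have hv : v ≠ 0 := by
    intro h
    rw [h] at hv0
    simp at hv0
  set μ := gaussianReal a v with hμ
  set ν := gaussianReal b v with hν
  set d : ℝ := b - a with hd
  have hd0 : 0 ≤ d := by simp [hd]; linarith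
  set c : ℝ := (a + b) / 2 with hc
  set c' : ℝ := c - d with hc'
  have hc'c : c' ≤ c := by simp [hc']; linarith
  -- translation: ν of translated sets
  have hmap : μ.map (· + d) = ν := by
    rw [hμ, hν, gaussianReal_map_add_const d]
    congr 1
    simp [hd]
  have hνIic : ν (Set.Iic c) = μ (Set.Iic c') := by
    rw [← hmap, Measure.map_apply (measurable_add_const d) measurableSet_Iic]
    congr 1
    ext x
    simp [hc', sub_sub_cancel, le_sub_iff_add_le]
  have hνIoi : ν (Set.Ioi c) = μ (Set.Ioi c') := by
    rw [← hmap, Measure.map_apply (measurable_add_const d) measurableSet_Ioi]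
    congr 1
    ext x
    simp [hc', lt_sub_iff_add_lt]
  -- density comparison on the two half-lines
  have h1 : ν.restrict (Set.Iic c) ≤ μ.restrict (Set.Iic c) := by
    rw [hμ, hν, gaussianReal_of_var_ne_zero _ hv, gaussianReal_of_var_ne_zero _ hv,
      restrict_withDensity measurableSet_Iic, restrict_withDensity measurableSet_Iic]
    refine withDensity_mono (ae_restrict_of_forall_mem measurableSet_Iic fun x hx ↦ ?_)
    refine gaussianPDF_le_gaussianPDF hv0 ?_
    have hx' : x ≤ (a + b) / 2 := hx
    nlinarith
  have h2 : μ.restrict (Set.Iic c)ᶜ ≤ ν.restrict (Set.Iic c)ᶜ := by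
    rw [hμ, hν, gaussianReal_of_var_ne_zero _ hv, gaussianReal_of_var_ne_zero _ hv,
      restrict_withDensity measurableSet_Iic.compl, restrict_withDensity measurableSet_Iic.compl]
    refine withDensity_mono (ae_restrict_of_forall_mem measurableSet_Iic.compl fun x hx ↦ ?_)
    refine gaussianPDF_le_gaussianPDF hv0 ?_
    have hx' : (a + b) / 2 < x := by simpa [Set.mem_compl_iff] using hx
    nlinarith
  -- the middle interval
  set I : ℝ≥0∞ := μ (Set.Ioc c' c) with hI
  have hIic_split : μ (Set.Iic c) = μ (Set.Iic c') + I := by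
    rw [hI, ← measure_union (Set.Iic_disjoint_Ioc le_rfl) measurableSet_Ioc,
      Set.Iic_union_Ioc_eq_Iic hc'c]
  have hIoi_split : ν (Set.Ioi c) = I + μ (Set.Ioi c) := by
    rw [hνIoi, hI, ← measure_union (Set.Ioc_disjoint_Ioi le_rfl) measurableSet_Ioi,
      Set.Ioc_union_Ioi_eq_Ioi hc'c]
  have hbound1 : (μ - ν) Set.univ ≤ I := by
    refine le_trans (sub_univ_le μ ν measurableSet_Iic h1 h2) ?_
    rw [hνIic, hIic_split, add_comm, ENNReal.add_sub_cancel_right (measure_ne_top _ _)]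
  have hbound2 : (ν - μ) Set.univ ≤ I := by
    have h1' : μ.restrict (Set.Ioi c) ≤ ν.restrict (Set.Ioi c) := by
      have : (Set.Iic c)ᶜ = Set.Ioi c := Set.compl_Iic
      rwa [this] at h2
    have h2' : ν.restrict (Set.Ioi c)ᶜ ≤ μ.restrict (Set.Ioi c)ᶜ := by
      have : (Set.Ioi c)ᶜ = Set.Iic c := Set.compl_Ioi
      rwa [this]
    refine le_trans (sub_univ_le ν μ measurableSet_Ioi h1' h2') ?_
    rw [hIoi_split, ENNReal.add_sub_cancel_right (measure_ne_top _ _)]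
  -- bound I by the sup of the density times the length
  have hIbound : I ≤ ENNReal.ofReal ((σ * Real.sqrt (2 * Real.pi))⁻¹) * ENNReal.ofReal d := by
    rw [hI, hμ, gaussianReal_apply _ hv]
    calc ∫⁻ x in Set.Ioc c' c, gaussianPDF a v x
        ≤ ∫⁻ _ in Set.Ioc c' c, ENNReal.ofReal ((σ * Real.sqrt (2 * Real.pi))⁻¹) := by
          refine setLIntegral_mono measurable_const fun x _ ↦ ?_
          unfold gaussianPDF
          apply ENNReal.ofReal_le_ofReal
          unfold gaussianPDFReal
          have hsqrt : Real.sqrt (2 * Real.pi * v) = σ * Real.sqrt (2 * Real.pi) := by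
            have : (2 * Real.pi * v : ℝ) = (σ ^ 2) * (2 * Real.pi) := by
              simp [hv_def]; exact mul_comm _ _
            rw [this, Real.sqrt_mul (sq_nonneg σ), Real.sqrt_sq hσ.le]
          rw [hsqrt]
          have hexp : Real.exp (-(x - a) ^ 2 / (2 * v)) ≤ 1 := by
            apply Real.exp_le_one_iff.2
            apply div_nonpos_of_nonpos_of_nonneg
            · simp [sq_nonneg]
            · positivity
          calc (σ * Real.sqrt (2 * Real.pi))⁻¹ * Real.exp (-(x - a) ^ 2 / (2 * v))
              ≤ (σ * Real.sqrt (2 * Real.pi))⁻¹ * 1 := by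
                refine mul_le_mul_of_nonneg_left hexp ?_
                positivity
            _ = (σ * Real.sqrt (2 * Real.pi))⁻¹ := mul_one _
      _ = ENNReal.ofReal ((σ * Real.sqrt (2 * Real.pi))⁻¹) * ENNReal.ofReal d := by
          rw [setLIntegral_const, Real.volume_Ioc]
          congr 1
          simp [hc']
  -- put everything together
  have hItoReal : I.toReal ≤ (σ * Real.sqrt (2 * Real.pi))⁻¹ * d := by
    have := ENNReal.toReal_mono (ENNReal.mul_ne_top ENNReal.ofReal_ne_top ENNReal.ofReal_ne_top) hIbound
    rwa [ENNReal.toReal_mul, ENNReal.toReal_ofReal (by positivity),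
      ENNReal.toReal_ofReal hd0] at this
  have habs : |a - b| = d := by rw [abs_sub_comm, abs_of_nonneg hd0]
  calc tvDist μ ν = ((μ - ν) Set.univ + (ν - μ) Set.univ).toReal := rfl
    _ ≤ (I + I).toReal := ENNReal.toReal_mono
        (ENNReal.add_ne_top.2 ⟨measure_ne_top _ _, measure_ne_top _ _⟩)
        (add_le_add hbound1 hbound2)
    _ = I.toReal + I.toReal := ENNReal.toReal_add (measure_ne_top _ _) (measure_ne_top _ _)
    _ ≤ (σ * Real.sqrt (2 * Real.pi))⁻¹ * d + (σ * Real.sqrt (2 * Real.pi))⁻¹ * d :=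
        add_le_add hItoReal hItoReal
    _ = 2 / (σ * Real.sqrt (2 * Real.pi)) * |a - b| := by rw [habs]; ring

/-- For Gaussian measures on `ℝ` with means `a`, `b` and common variance `σ²`,
`‖μ_a - μ_b‖_var ≤ (2 / (σ √(2π))) |a - b|`. -/
theorem stmt10 (σ : ℝ) (hσ : 0 < σ) (a b : ℝ) :
    tvDist (gaussianReal a ⟨σ ^ 2, sq_nonneg σ⟩) (gaussianReal b ⟨σ ^ 2, sq_nonneg σ⟩) ≤
      2 / (σ * Real.sqrt (2 * Real.pi)) * |a - b| := by
  rcases le_total a b with h | h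
  · exact key_le σ hσ a b h
  · rw [tvDist_comm, abs_sub_comm]
    exact key_le σ hσ b a h
end

section
/- Let f be a convex, strictly increasing continuous function on [a,b] whose inverse f^{-1} is differentiable on (f(a), f(b)) with strictly positive derivative of f, and let λ be Lebesgue measure restricted to [a,b]. Then for every u with 0 ≤ u ≤ f(b) − f(a), the total variation distance between the pushforward λ∘f^{-1} and the pushforward λ∘f_u^{-1} (where f_u(t) = f(t − u)) equals 2·(f^{-1}(f(a) + u) − a). -/
open MeasureTheory

/-- Four-point convexity inequality. -/
lemma convex_four {a b : ℝ} {f : ℝ → ℝ} (hconv : ConvexOn ℝ (Set.Icc a b) f)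
    {x p δ : ℝ} (hδ : 0 ≤ δ) (hxp : x ≤ p)
    (hx : x ∈ Set.Icc a b) (hxδ : x + δ ∈ Set.Icc a b)
    (hp : p ∈ Set.Icc a b) (hpδ : p + δ ∈ Set.Icc a b) :
    f (x + δ) + f p ≤ f x + f (p + δ) := by
  rcases eq_or_lt_of_le (by linarith : x ≤ p + δ) with heq | hlt
  · have h1 : δ = 0 := by linarith
    have h2 : p = x := by linarith
    rw [h1, h2, add_zero]
  · set L : ℝ := p + δ - x with hL
    have hL0 : 0 < L := by simp only [hL]; linarith
    set t : ℝ := δ / L with ht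
    set s : ℝ := (p - x) / L with hs
    have hts : t + s = 1 := by
      rw [ht, hs, ← add_div, div_eq_one_iff_eq hL0.ne', hL]; ring
    have ht0 : 0 ≤ t := div_nonneg hδ hL0.le
    have hs0 : 0 ≤ s := div_nonneg (by linarith) hL0.le
    have e1 : s • x + t • (p + δ) = x + δ := by
      simp only [smul_eq_mul, hs, ht]
      field_simp
      ring
    have e2 : t • x + s • (p + δ) = p := by
      simp only [smul_eq_mul, hs, ht]
      field_simp
      ring
    have h1 := hconv.2 hx hpδ hs0 ht0 (by linarith)
    have h2 := hconv.2 hx hpδ ht0 hs0 hts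
    rw [e1] at h1
    rw [e2] at h2
    simp only [smul_eq_mul] at h1 h2
    have e3 : s + t = 1 := by linarith
    have e4 : s * f x + t * f x = f x := by rw [← add_mul, e3, one_mul]
    have e5 : t * f (p + δ) + s * f (p + δ) = f (p + δ) := by
      rw [← add_mul, hts, one_mul]
    linarith

/-- For `f` convex, strictly increasing and continuous on `[a,b]`, with differentiable
inverse on `(f(a), f(b))` and strictly positive derivative of `f`, and `λ` Lebesgue measure
restricted to `[a,b]`, for every `0 ≤ u ≤ f(b) - f(a)` the total variation distance between
`λ∘f⁻¹` and its translate by `u` (the pushforward under `f_u(t) = f(t-u)`) equals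
`2 (f⁻¹(f(a) + u) - a)`. -/
theorem stmt12 (a b : ℝ) (hab : a < b) (f finv : ℝ → ℝ)
    (hconv : ConvexOn ℝ (Set.Icc a b) f)
    (hmono : StrictMonoOn f (Set.Icc a b))
    (hcont : ContinuousOn f (Set.Icc a b))
    (hfinv : ∀ x ∈ Set.Icc a b, finv (f x) = x)
    (hfinv' : ∀ y ∈ Set.Icc (f a) (f b), finv y ∈ Set.Icc a b ∧ f (finv y) = y)
    (hfinvdiff : ∀ y ∈ Set.Ioo (f a) (f b), DifferentiableAt ℝ finv y)
    (hpos : ∀ x ∈ Set.Ioo a b, 0 < deriv f x)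
    (u : ℝ) (hu0 : 0 ≤ u) (hub : u ≤ f b - f a) :
    tvDist ((volume.restrict (Set.Icc a b)).map f)
        (((volume.restrict (Set.Icc a b)).map f).map (fun y => y + u)) =
      2 * (finv (f a + u) - a) := by
  have hmem_a : a ∈ Set.Icc a b := Set.left_mem_Icc.2 hab.le
  have hmem_b : b ∈ Set.Icc a b := Set.right_mem_Icc.2 hab.le
  have hmonoOn : MonotoneOn f (Set.Icc a b) := hmono.monotoneOn
  have hc' : f a + u ∈ Set.Icc (f a) (f b) := ⟨by linarith, by linarith⟩
  obtain ⟨hx₀mem, hfx₀⟩ := hfinv' _ hc'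
  set x₀ := finv (f a + u) with hx₀def
  have hy₁' : f b - u ∈ Set.Icc (f a) (f b) := ⟨by linarith, by linarith⟩
  obtain ⟨hy₁mem, hfy₁⟩ := hfinv' _ hy₁'
  set y₁ := finv (f b - u) with hy₁def
  have hrev : ∀ x ∈ Set.Icc a b, ∀ y ∈ Set.Icc a b, f x ≤ f y → x ≤ y := by
    intro x hx y hy h
    by_contra hlt
    exact absurd (hmono hy hx (lt_of_not_ge hlt)) (not_lt.2 h)
  set μ := (volume.restrict (Set.Icc a b)).map f with hμ
  have haef : AEMeasurable f (volume.restrict (Set.Icc a b)) :=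
    hcont.aemeasurable measurableSet_Icc
  have hμapp : ∀ s : Set ℝ, MeasurableSet s →
      μ s = volume ({x | f x ∈ s} ∩ Set.Icc a b) := by
    intro s hs
    rw [hμ, Measure.map_apply_of_aemeasurable haef hs,
      Measure.restrict_apply' measurableSet_Icc]
    rfl
  set ν := μ.map (fun y => y + u) with hν
  have hνapp : ∀ s : Set ℝ, MeasurableSet s →
      ν s = volume ({x | f x + u ∈ s} ∩ Set.Icc a b) := by
    intro s hs
    rw [hν, Measure.map_apply (measurable_add_const u) hs,
      hμapp _ ((measurable_add_const u) hs)]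
    rfl
  have hμuniv : μ Set.univ = ENNReal.ofReal (b - a) := by
    rw [hμapp _ MeasurableSet.univ]
    simp [Real.volume_Icc]
  have hνuniv : ν Set.univ = ENNReal.ofReal (b - a) := by
    rw [hνapp _ MeasurableSet.univ]
    simp [Real.volume_Icc]
  haveI : IsFiniteMeasure μ := ⟨by rw [hμuniv]; exact ENNReal.ofReal_lt_top⟩
  haveI : IsFiniteMeasure ν := ⟨by rw [hνuniv]; exact ENNReal.ofReal_lt_top⟩
  have hμIio : μ (Set.Iio (f a + u)) = ENNReal.ofReal (x₀ - a) := by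
    rw [hμapp _ measurableSet_Iio]
    have hset : {x | f x ∈ Set.Iio (f a + u)} ∩ Set.Icc a b = Set.Ico a x₀ := by
      ext x
      simp only [Set.mem_inter_iff, Set.mem_setOf_eq, Set.mem_Iio, Set.mem_Icc, Set.mem_Ico]
      constructor
      · rintro ⟨hfx, hax, hxb⟩
        refine ⟨hax, ?_⟩
        by_contra h
        push_neg at h
        have := hmonoOn hx₀mem ⟨hax, hxb⟩ h
        rw [hfx₀] at this
        linarith
      · rintro ⟨hax, hxx₀⟩
        have hx : x ∈ Set.Icc a b := ⟨hax, hxx₀.le.trans hx₀mem.2⟩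
        refine ⟨?_, hx.1, hx.2⟩
        have := hmono hx hx₀mem hxx₀
        rw [hfx₀] at this
        exact this
    rw [hset, Real.volume_Ico]
  have hμIci : μ (Set.Ici (f a + u)) = ENNReal.ofReal (b - x₀) := by
    rw [hμapp _ measurableSet_Ici]
    have hset : {x | f x ∈ Set.Ici (f a + u)} ∩ Set.Icc a b = Set.Icc x₀ b := by
      ext x
      simp only [Set.mem_inter_iff, Set.mem_setOf_eq, Set.mem_Ici, Set.mem_Icc]
      constructor
      · rintro ⟨hfx, hax, hxb⟩
        exact ⟨hrev x₀ hx₀mem x ⟨hax, hxb⟩ (by rw [hfx₀]; exact hfx), hxb⟩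
      · rintro ⟨hx₀x, hxb⟩
        have hx : x ∈ Set.Icc a b := ⟨hx₀mem.1.trans hx₀x, hxb⟩
        refine ⟨?_, hx.1, hx.2⟩
        have := hmonoOn hx₀mem hx hx₀x
        rw [hfx₀] at this
        exact this
    rw [hset, Real.volume_Icc]
  have hνIio : ν (Set.Iio (f a + u)) = 0 := by
    rw [hνapp _ measurableSet_Iio]
    have hset : {x | f x + u ∈ Set.Iio (f a + u)} ∩ Set.Icc a b = ∅ := by
      rw [Set.eq_empty_iff_forall_notMem]
      rintro x ⟨hfx, hx⟩
      simp only [Set.mem_setOf_eq, Set.mem_Iio] at hfx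
      have := hmonoOn hmem_a hx hx.1
      linarith
    rw [hset, measure_empty]
  have hνIci : ν (Set.Ici (f a + u)) = ENNReal.ofReal (b - a) := by
    rw [hνapp _ measurableSet_Ici]
    have hset : {x | f x + u ∈ Set.Ici (f a + u)} ∩ Set.Icc a b = Set.Icc a b := by
      apply Set.inter_eq_right.2
      intro x hx
      simp only [Set.mem_setOf_eq, Set.mem_Ici]
      have := hmonoOn hmem_a hx hx.1
      linarith
    rw [hset, Real.volume_Icc]
  set ρ := μ.restrict (Set.Ici (f a + u)) with hρ
  -- the key analytic inequality: ρ ≤ ν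
  have hρν : ρ ≤ ν := by
    rw [Measure.le_iff]
    intro s hs
    rw [hρ, Measure.restrict_apply hs, hμapp _ (hs.inter measurableSet_Ici), hνapp _ hs]
    set G : ℝ → ℝ := fun y => finv (f y + u) with hG
    have hy₁b : y₁ ≤ b := hy₁mem.2
    have hGmem : ∀ y ∈ Set.Icc a y₁, G y ∈ Set.Icc a b ∧ f (G y) = f y + u := by
      intro y hy
      have hyab : y ∈ Set.Icc a b := ⟨hy.1, hy.2.trans hy₁b⟩
      have h1 : f y + u ∈ Set.Icc (f a) (f b) := by
        constructor
        · have := hmonoOn hmem_a hyab hy.1; linarith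
        · have := hmonoOn hyab hy₁mem hy.2; rw [hfy₁] at this; linarith
      exact hfinv' _ h1
    have hkey : ∀ x ∈ Set.Icc a y₁, ∀ y ∈ Set.Icc a y₁, x ≤ y →
        G x ≤ G y ∧ G y - G x ≤ y - x := by
      intro x hx y hy hxy
      have hxab : x ∈ Set.Icc a b := ⟨hx.1, hx.2.trans hy₁b⟩
      have hyab : y ∈ Set.Icc a b := ⟨hy.1, hy.2.trans hy₁b⟩
      obtain ⟨hGx, hfGx⟩ := hGmem x hx
      obtain ⟨hGy, hfGy⟩ := hGmem y hy
      have hfxy : f x ≤ f y := hmonoOn hxab hyab hxy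
      have hGxy : G x ≤ G y := hrev _ hGx _ hGy (by rw [hfGx, hfGy]; linarith)
      refine ⟨hGxy, ?_⟩
      rcases le_total b (G x + (y - x)) with hcase | hcase
      · linarith [hGy.2]
      · have hxGx : x ≤ G x := hrev x hxab _ hGx (by rw [hfGx]; linarith)
        have hGxym : G x + (y - x) ∈ Set.Icc a b := ⟨by linarith [hGx.1], hcase⟩
        have h4 := convex_four hconv (by linarith : (0:ℝ) ≤ y - x) hxGx hxab
          (by rw [show x + (y - x) = y by ring]; exact hyab) hGx hGxym
        rw [show x + (y - x) = y by ring, hfGx] at h4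
        have h5 : f (G y) ≤ f (G x + (y - x)) := by rw [hfGy]; linarith
        have h6 : G y ≤ G x + (y - x) := hrev _ hGy _ hGxym h5
        linarith
    have hlip : LipschitzOnWith 1 G (Set.Icc a y₁) := by
      apply LipschitzOnWith.of_dist_le_mul
      intro p hp q hq
      rw [Real.dist_eq, Real.dist_eq, NNReal.coe_one, one_mul]
      rcases le_total p q with h | h
      · obtain ⟨h1, h2⟩ := hkey p hp q hq h
        rw [abs_sub_comm (G p) (G q), abs_of_nonneg (by linarith), abs_sub_comm p q,
          abs_of_nonneg (by linarith)]
        linarith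
      · obtain ⟨h1, h2⟩ := hkey q hq p hp h
        rw [abs_of_nonneg (by linarith), abs_of_nonneg (by linarith)]
        linarith
    set B := {y | f y + u ∈ s} ∩ Set.Icc a y₁ with hB
    have hAB : {x | f x ∈ s ∩ Set.Ici (f a + u)} ∩ Set.Icc a b ⊆ G '' B := by
      rintro x ⟨hfx, hxab⟩
      obtain ⟨hfxs, hfxc⟩ := hfx
      have hfxb : f x ≤ f b := hmonoOn hxab hmem_b hxab.2
      have h1 : f x - u ∈ Set.Icc (f a) (f b) := by
        simp only [Set.mem_Ici] at hfxc
        exact ⟨by linarith, by linarith⟩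
      obtain ⟨hymem, hfy⟩ := hfinv' _ h1
      refine ⟨finv (f x - u), ⟨?_, hymem.1, ?_⟩, ?_⟩
      · show f (finv (f x - u)) + u ∈ s
        rw [hfy, sub_add_cancel]
        exact hfxs
      · exact hrev _ hymem _ hy₁mem (by rw [hfy, hfy₁]; linarith)
      · show finv (f (finv (f x - u)) + u) = x
        rw [hfy, sub_add_cancel]
        exact hfinv x hxab
    calc volume ({x | f x ∈ s ∩ Set.Ici (f a + u)} ∩ Set.Icc a b)
        ≤ volume (G '' B) := measure_mono hAB
      _ ≤ volume B := by
          have hlip' : LipschitzOnWith 1 G B := hlip.mono Set.inter_subset_right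
          have h := hlip'.hausdorffMeasure_image_le (zero_le_one (α := ℝ))
          rw [MeasureTheory.hausdorffMeasure_real] at h
          simpa using h
      _ ≤ volume ({x | f x + u ∈ s} ∩ Set.Icc a b) :=
          measure_mono (Set.inter_subset_inter_right _ (Set.Icc_subset_Icc_right hy₁b))
  -- computation of μ - ν
  have hμν : μ - ν = μ.restrict (Set.Iio (f a + u)) := by
    apply le_antisymm
    · apply Measure.sub_le_of_le_add
      calc μ = μ.restrict (Set.Iio (f a + u)) + μ.restrict (Set.Iio (f a + u))ᶜ :=
            (Measure.restrict_add_restrict_compl measurableSet_Iio).symm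
        _ = μ.restrict (Set.Iio (f a + u)) + ρ := by rw [Set.compl_Iio]
        _ ≤ μ.restrict (Set.Iio (f a + u)) + ν := add_le_add_right hρν _
    · rw [Measure.sub_def]
      apply le_sInf
      rintro d hd
      have h1 : μ.restrict (Set.Iio (f a + u)) ≤ (d + ν).restrict (Set.Iio (f a + u)) :=
        Measure.restrict_mono (subset_refl _) hd
      rw [Measure.restrict_add, Measure.restrict_eq_zero.2 hνIio, add_zero] at h1
      exact h1.trans Measure.restrict_le_self
  -- computation of ν - μ
  haveI : IsFiniteMeasure ρ := by rw [hρ]; infer_instance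
  have hρν' : ρ ≤ ν.restrict (Set.Ici (f a + u)) := by
    have hρρ : ρ = ρ.restrict (Set.Ici (f a + u)) := by
      rw [hρ, Measure.restrict_restrict measurableSet_Ici, Set.inter_self]
    rw [hρρ]
    exact Measure.restrict_mono (subset_refl _) hρν
  set ξ := ν.restrict (Set.Ici (f a + u)) - ρ with hξ
  have hνrestr : ν = ν.restrict (Set.Ici (f a + u)) := by
    conv_lhs => rw [← Measure.restrict_add_restrict_compl (μ := ν) (s := Set.Ici (f a + u)) measurableSet_Ici]
    rw [Set.compl_Ici, Measure.restrict_eq_zero.2 hνIio, add_zero]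
  have hνμ : ν - μ = ξ := by
    apply le_antisymm
    · apply Measure.sub_le_of_le_add
      calc ν = ν.restrict (Set.Ici (f a + u)) := hνrestr
        _ = ξ + ρ := (Measure.sub_add_cancel_of_le hρν').symm
        _ ≤ ξ + μ := add_le_add_right Measure.restrict_le_self _
    · rw [Measure.sub_def]
      apply le_sInf
      rintro d hd
      rw [Measure.le_iff]
      intro s hs
      rw [hξ, Measure.sub_apply hs hρν', Measure.restrict_apply hs, hρ,
        Measure.restrict_apply hs]
      refine le_trans ?_ (measure_mono Set.inter_subset_left :
        d (s ∩ Set.Ici (f a + u)) ≤ d s)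
      rw [tsub_le_iff_right]
      have h2 := Measure.le_iff'.1 hd (s ∩ Set.Ici (f a + u))
      rw [Measure.add_apply] at h2
      exact h2
  have hax₀ : a ≤ x₀ := hx₀mem.1
  have hx₀b : x₀ ≤ b := hx₀mem.2
  have hv1 : (μ - ν) Set.univ = ENNReal.ofReal (x₀ - a) := by
    rw [hμν, Measure.restrict_apply_univ, hμIio]
  have hv2 : (ν - μ) Set.univ = ENNReal.ofReal (x₀ - a) := by
    rw [hνμ, hξ, Measure.sub_apply MeasurableSet.univ hρν', Measure.restrict_apply_univ,
      hρ, Measure.restrict_apply_univ, hνIci, hμIci,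
      ← ENNReal.ofReal_sub _ (by linarith : (0:ℝ) ≤ b - x₀)]
    congr 1
    ring
  simp only [tvDist]
  rw [hv1, hv2, ← ENNReal.ofReal_add (by linarith) (by linarith),
    ENNReal.toReal_ofReal (by linarith)]
  ring
end
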